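/- For every q ∈ (0,1), the function f : (0, ∞) → ℝ defined by f(λ) = −λ · log( q·exp(−1/λ) + (1−q) ) is strictly increasing on (0, ∞), satisfies f(λ) < q for every λ > 0, and f(λ) → q as λ → ∞. -/

import Mathlib

open Filter

/-- **Monotonicity of the multiplier certainty equivalent in `λ`.** For each `q ∈ (0,1)`,
the map `λ ↦ −λ log(q e^{−1/λ} + (1−q))` is strictly increasing on `(0, ∞)`, is everywhere
strictly below `q`, and tends to `q` as `λ → ∞`. -/
theorem multiplier_certainty_equivalent_increasing
    (q : ℝ) (hq0 : 0 < q) (hq1 : q < 1) :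
    StrictMonoOn (fun lam : ℝ => -lam * Real.log (q * Real.exp (-1 / lam) + (1 - q)))
        (Set.Ioi (0 : ℝ)) ∧
    (∀ lam : ℝ, 0 < lam →
      -lam * Real.log (q * Real.exp (-1 / lam) + (1 - q)) < q) ∧
    Tendsto (fun lam : ℝ => -lam * Real.log (q * Real.exp (-1 / lam) + (1 - q)))
      atTop (nhds q) := by
  have hq1' : 0 < 1 - q := by linarith
  have hpos : ∀ t : ℝ, 0 < q * Real.exp t + (1 - q) := fun t => by positivity
  refine ⟨?_, ?_, ?_⟩
  · -- strict monotonicity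
    intro l1 h1 l2 h2 hlt
    simp only [Set.mem_Ioi] at h1 h2
    have ht1pos : (0:ℝ) < 1 / l1 := by positivity
    have ha0 : 0 < l1 / l2 := by positivity
    have ha1 : l1 / l2 < 1 := (div_lt_one h2).2 hlt
    have hne : Real.exp (-(1 / l1)) ≠ (1 : ℝ) := by
      simp only [ne_eq, Real.exp_eq_one_iff]
      intro h
      nlinarith
    -- strict concavity of x ^ a on [0, ∞)
    have key := (Real.strictConcaveOn_rpow ha0 ha1).2
      (Set.mem_Ici.2 (Real.exp_pos (-(1/l1))).le) (Set.mem_Ici.2 (zero_le_one))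
      hne hq0 hq1' (by ring)
    simp only [smul_eq_mul, mul_one, Real.one_rpow] at key
    -- rewrite (exp (-(1/l1))) ^ (l1/l2) = exp (-(1/l2))
    have hexp : Real.exp (-(1 / l1)) ^ (l1 / l2 : ℝ) = Real.exp (-(1 / l2)) := by
      rw [← Real.exp_mul]
      congr 1
      field_simp
    rw [hexp] at key
    -- key : q * exp (-(1/l2)) + (1-q) < (q * exp (-(1/l1)) + (1-q)) ^ (l1/l2)
    have hlog := Real.log_lt_log (hpos _) key
    rw [Real.log_rpow (hpos _)] at hlog
    have h1lam : (-1 : ℝ) / l1 = -(1 / l1) := by ring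
    have h2lam : (-1 : ℝ) / l2 = -(1 / l2) := by ring
    simp only [h1lam, h2lam]
    have := mul_lt_mul_of_pos_left hlog h2
    have heq : l2 * (l1 / l2 * Real.log (q * Real.exp (-(1 / l1)) + (1 - q)))
        = l1 * Real.log (q * Real.exp (-(1 / l1)) + (1 - q)) := by
      field_simp
    rw [heq] at this
    nlinarith [this]
  · -- bounded above by q
    intro lam hlam
    have hne : (-(1 / lam) : ℝ) ≠ 0 := by
      have : (0:ℝ) < 1 / lam := by positivity
      intro h; nlinarith
    have key := strictConvexOn_exp.2 (Set.mem_univ (-(1/lam))) (Set.mem_univ (0:ℝ))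
      hne hq0 hq1' (by ring)
    simp only [smul_eq_mul, mul_zero, add_zero, Real.exp_zero, mul_one] at key
    -- key : exp (q * -(1/lam)) < q * exp (-(1/lam)) + (1 - q)
    have hlog := Real.log_lt_log (Real.exp_pos _) key
    rw [Real.log_exp] at hlog
    have := mul_lt_mul_of_pos_left hlog hlam
    have h1lam : (-1 : ℝ) / lam = -(1 / lam) := by ring
    rw [h1lam]
    have heq : lam * (q * -(1 / lam)) = -q := by field_simp
    nlinarith [this]
  · -- limit
    set h : ℝ → ℝ := fun t => -Real.log (q * Real.exp (-t) + (1 - q)) with hh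
    have hderiv : HasDerivAt h q 0 := by
      have hneg : HasDerivAt (fun t : ℝ => -t) (-1) 0 := (hasDerivAt_id 0).neg
      have hinner : HasDerivAt (fun t : ℝ => q * Real.exp (-t) + (1 - q))
          (q * (Real.exp (-(0:ℝ)) * -1)) 0 := ((hneg.exp).const_mul q).add_const (1 - q)
      have hlog := (hinner.log (ne_of_gt (hpos _))).neg
      convert hlog using 1
      · rfl
      · rfl
      · rfl
      · simp
    have hslope := hasDerivAt_iff_tendsto_slope.1 hderiv
    have hinv : Tendsto (fun lam : ℝ => 1 / lam) atTop (nhdsWithin 0 {(0:ℝ)}ᶜ) := by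
      have : Tendsto (fun lam : ℝ => 1 / lam) atTop (nhdsWithin 0 (Set.Ioi 0)) := by
        simpa using tendsto_inv_atTop_nhdsGT_zero
      exact this.mono_right (nhdsWithin_mono _ (fun x hx => ne_of_gt hx))
    have := hslope.comp hinv
    refine this.congr' ?_
    filter_upwards [eventually_gt_atTop (0:ℝ)] with lam hlam
    have h0 : h 0 = 0 := by simp [hh]
    simp only [Function.comp_apply, slope_def_field, h0, hh]
    rw [div_sub' (ne_of_gt hlam)]
    field_simp
    simp
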